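/- arXiv:1402.3125 — 3 statements merged into one kernel-verified Lean document; each statement's English description precedes it below -/
import Mathlib

section
/- Let X and A be random variables with finite ranges and let L be a {0,1}-valued random variable on the same probability space. Assume that conditioned on L=0 the message A is independent of X, i.e. Pr(A=a | X=x, L=0) = Pr(A=a | L=0) for all a and all x with Pr(X=x, L=0) > 0, and assume Pr(L=0 | X=x, A=a) > 0 whenever Pr(X=x, A=a) > 0. Then the mutual information satisfies I(X;A) ≤ susp(X,A) − susp(X); that is, the amount of information A reveals about X is at most the expected increase in suspicion given X. -/
open Finset

/-- Probability of an event `E` under the probability mass function `p`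
on a finite sample space `Ω`. -/
noncomputable def Pr {Ω : Type*} [Fintype Ω] (p : Ω → ℝ) (E : Set Ω) : ℝ :=
  ∑ ω, E.indicator p ω

/-- Conditional probability `Pr(E | F)`. -/
noncomputable def cPr {Ω : Type*} [Fintype Ω] (p : Ω → ℝ) (E F : Set Ω) : ℝ :=
  Pr p (E ∩ F) / Pr p F

/-- The suspicion given a random variable `Yv`:
`susp(Y) = Σ_y Pr(Y=y) · (−log₂ Pr(L=0 | Y=y))`. -/
noncomputable def susp {Ω Y : Type*} [Fintype Ω] [Fintype Y] (p : Ω → ℝ)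
    (L : Ω → Bool) (Yv : Ω → Y) : ℝ :=
  ∑ y, Pr p {ω | Yv ω = y} * (-Real.logb 2 (cPr p {ω | L ω = false} {ω | Yv ω = y}))

/-- Mutual information (base 2) between two finite-valued random variables. -/
noncomputable def mutInfo {Ω S T : Type*} [Fintype Ω] [Fintype S] [Fintype T]
    (p : Ω → ℝ) (Xv : Ω → S) (Av : Ω → T) : ℝ :=
  ∑ x, ∑ a, Pr p {ω | Xv ω = x ∧ Av ω = a} *
    Real.logb 2 (Pr p {ω | Xv ω = x ∧ Av ω = a} /
      (Pr p {ω | Xv ω = x} * Pr p {ω | Av ω = a}))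

/-- Conditional Shannon entropy (base 2) `H(A | X)`. -/
noncomputable def condEntropy {Ω S T : Type*} [Fintype Ω] [Fintype S] [Fintype T]
    (p : Ω → ℝ) (Av : Ω → T) (Xv : Ω → S) : ℝ :=
  ∑ x, ∑ a, Pr p {ω | Xv ω = x ∧ Av ω = a} *
    Real.logb 2 (Pr p {ω | Xv ω = x} / Pr p {ω | Xv ω = x ∧ Av ω = a})

/-- Conditional mutual information (base 2) `I(X; A | Z)`. -/
noncomputable def condMutInfo {Ω S T U : Type*} [Fintype Ω] [Fintype S] [Fintype T] [Fintype U]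
    (p : Ω → ℝ) (Xv : Ω → S) (Av : Ω → T) (Zv : Ω → U) : ℝ :=
  ∑ z, ∑ x, ∑ a, Pr p {ω | Xv ω = x ∧ Av ω = a ∧ Zv ω = z} *
    Real.logb 2 ((Pr p {ω | Xv ω = x ∧ Av ω = a ∧ Zv ω = z} * Pr p {ω | Zv ω = z}) /
      (Pr p {ω | Xv ω = x ∧ Zv ω = z} * Pr p {ω | Av ω = a ∧ Zv ω = z}))

section SuspHelpers

variable {Ω : Type*} [Fintype Ω]

lemma Pr_nonneg' (p : Ω → ℝ) (hp : ∀ ω, 0 ≤ p ω) (E : Set Ω) : 0 ≤ Pr p E :=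
  Finset.sum_nonneg fun ω _ => Set.indicator_nonneg (fun ω _ => hp ω) ω

lemma Pr_mono' (p : Ω → ℝ) (hp : ∀ ω, 0 ≤ p ω) {E F : Set Ω} (h : E ⊆ F) :
    Pr p E ≤ Pr p F :=
  Finset.sum_le_sum fun ω _ => Set.indicator_le_indicator_of_subset h hp ω

lemma le_Pr' (p : Ω → ℝ) (hp : ∀ ω, 0 ≤ p ω) {E : Set Ω} {ω : Ω} (hω : ω ∈ E) :
    p ω ≤ Pr p E := by
  classical
  have h := Finset.single_le_sum (f := fun ω => E.indicator p ω)
    (fun i _ => Set.indicator_nonneg (fun ω _ => hp ω) i) (Finset.mem_univ ω)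
  simpa [Pr, Set.indicator_of_mem hω] using h

lemma Pr_partition' {α : Type*} [Fintype α] (p : Ω → ℝ) (g : Ω → α) (E : Set Ω) :
    Pr p E = ∑ y, Pr p {ω | g ω = y ∧ ω ∈ E} := by
  classical
  unfold Pr
  rw [Finset.sum_comm]
  refine Finset.sum_congr rfl fun ω _ => ?_
  by_cases hE : ω ∈ E
  · rw [Set.indicator_of_mem hE]
    rw [Finset.sum_eq_single (g ω)]
    · simp [Set.indicator_apply, Set.mem_setOf_eq, hE]
    · intro b _ hb
      simp [Set.indicator_apply, Set.mem_setOf_eq]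
      intro h; exact absurd h.symm hb
    · simp
  · simp [Set.indicator_of_notMem hE, Set.indicator_apply, Set.mem_setOf_eq, hE]

lemma gibbs' {ι : Type*} [Fintype ι] (P Q : ι → ℝ) (hP : ∀ i, 0 ≤ P i)
    (hQ : ∀ i, 0 ≤ Q i) (hPQ : ∀ i, 0 < P i → 0 < Q i)
    (hQ1 : ∑ i, Q i ≤ 1) (hP1 : ∑ i, P i = 1) :
    0 ≤ ∑ i, P i * Real.logb 2 (P i / Q i) := by
  have hlog2 : (0:ℝ) < Real.log 2 := Real.log_pos one_lt_two
  have key : ∀ i, -(P i * Real.logb 2 (P i / Q i)) ≤ (Q i - P i) / Real.log 2 := by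
    intro i
    rcases eq_or_lt_of_le (hP i) with h0 | h0
    · rw [← h0]
      simp only [zero_mul, neg_zero, sub_zero]
      exact div_nonneg (hQ i) hlog2.le
    · have hQi := hPQ i h0
      have hlogle : Real.log (Q i / P i) ≤ Q i / P i - 1 :=
        Real.log_le_sub_one_of_pos (div_pos hQi h0)
      have hflip : Real.logb 2 (Q i / P i) = -Real.logb 2 (P i / Q i) := by
        rw [← Real.logb_inv, inv_div]
      have h1 : -(P i * Real.logb 2 (P i / Q i)) = P i * Real.logb 2 (Q i / P i) := by
        rw [hflip]; ring
      rw [h1, Real.logb, div_eq_mul_inv (Real.log _)]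
      calc P i * (Real.log (Q i / P i) * (Real.log 2)⁻¹)
          ≤ P i * ((Q i / P i - 1) * (Real.log 2)⁻¹) := by
            apply mul_le_mul_of_nonneg_left _ h0.le
            exact mul_le_mul_of_nonneg_right hlogle (by positivity)
        _ = (Q i - P i) / Real.log 2 := by
            field_simp
  have hsum := Finset.sum_le_sum (fun i (_ : i ∈ Finset.univ) => key i)
  rw [Finset.sum_neg_distrib] at hsum
  have hrhs : ∑ i, (Q i - P i) / Real.log 2 = (∑ i, Q i - 1) / Real.log 2 := by
    rw [← Finset.sum_div, Finset.sum_sub_distrib, hP1]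
  rw [hrhs] at hsum
  have : (∑ i, Q i - 1) / Real.log 2 ≤ 0 :=
    div_nonpos_of_nonpos_of_nonneg (by linarith) hlog2.le
  linarith

end SuspHelpers

/-- If `A` is independent of `X` conditioned on `L = 0`, then
`I(X;A) ≤ susp(X,A) − susp(X)`. -/
theorem info_le_susp_increase {Ω S T : Type*} [Fintype Ω] [Fintype S] [Fintype T]
    (p : Ω → ℝ) (hp : ∀ ω, 0 ≤ p ω) (hp1 : ∑ ω, p ω = 1)
    (X : Ω → S) (A : Ω → T) (L : Ω → Bool)
    (hindep : ∀ (a : T) (x : S), 0 < Pr p {ω | X ω = x ∧ L ω = false} →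
      cPr p {ω | A ω = a} {ω | X ω = x ∧ L ω = false} =
        cPr p {ω | A ω = a} {ω | L ω = false})
    (hpos : ∀ (x : S) (a : T), 0 < Pr p {ω | X ω = x ∧ A ω = a} →
      0 < cPr p {ω | L ω = false} {ω | X ω = x ∧ A ω = a}) :
    mutInfo p X A ≤ susp p L (fun ω => (X ω, A ω)) - susp p L X := by
  classical
  -- decomposition of marginals
  have hPx : ∀ x : S, Pr p {ω | X ω = x} = ∑ a, Pr p {ω | X ω = x ∧ A ω = a} := by
    intro x
    rw [Pr_partition' p A {ω | X ω = x}]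
    refine Finset.sum_congr rfl fun a _ => ?_
    congr 1
    ext ω
    simp [Set.mem_setOf_eq, and_comm]
  have hPa : ∀ a : T, Pr p {ω | A ω = a} = ∑ x, Pr p {ω | X ω = x ∧ A ω = a} := fun a =>
    Pr_partition' p X {ω | A ω = a}
  have hPuniv : Pr p Set.univ = 1 := by
    simpa [Pr, Set.indicator_univ] using hp1
  have hPasum : ∑ a, Pr p {ω | A ω = a} = 1 := by
    rw [← hPuniv, Pr_partition' p A Set.univ]
    refine Finset.sum_congr rfl fun a _ => ?_
    congr 1
    ext ω
    simp
  -- positivity facts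
  have hnumpos : ∀ (x : S) (a : T), 0 < Pr p {ω | X ω = x ∧ A ω = a} →
      0 < Pr p ({ω | L ω = false} ∩ {ω | X ω = x ∧ A ω = a}) := by
    intro x a hxa
    have h := hpos x a hxa
    rw [cPr] at h
    rcases div_pos_iff.mp h with ⟨h1, _⟩ | ⟨_, h2⟩
    · exact h1
    · linarith
  obtain ⟨ω0, hω0⟩ : ∃ ω, 0 < p ω := by
    by_contra h
    push_neg at h
    have hz : ∀ ω, p ω = 0 := fun ω => le_antisymm (h ω) (hp ω)
    rw [Finset.sum_congr rfl (fun ω _ => hz ω)] at hp1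
    simp at hp1
  have hxa0 : 0 < Pr p {ω | X ω = X ω0 ∧ A ω = A ω0} :=
    lt_of_lt_of_le hω0 (le_Pr' p hp ⟨rfl, rfl⟩)
  have hPL0 : 0 < Pr p {ω | L ω = false} :=
    lt_of_lt_of_le (hnumpos _ _ hxa0) (Pr_mono' p hp Set.inter_subset_left)
  -- the conditional distribution of A given L = 0
  set q : T → ℝ := fun a => Pr p ({ω | A ω = a} ∩ {ω | L ω = false}) / Pr p {ω | L ω = false}
    with hqdef
  have hqnonneg : ∀ a, 0 ≤ q a := fun a =>
    div_nonneg (Pr_nonneg' p hp _) hPL0.le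
  have hqsum : ∑ a, q a = 1 := by
    have hpart : ∑ a, Pr p ({ω | A ω = a} ∩ {ω | L ω = false}) = Pr p {ω | L ω = false} :=
      (Pr_partition' p A {ω | L ω = false}).symm
    rw [hqdef, ← Finset.sum_div, hpart, div_self hPL0.ne']
  -- the key pointwise identity
  have hkey : ∀ (x : S) (a : T),
      Pr p {ω | X ω = x ∧ A ω = a} *
          (-Real.logb 2 (cPr p {ω | L ω = false} {ω | X ω = x ∧ A ω = a})) -
        Pr p {ω | X ω = x ∧ A ω = a} *
          (-Real.logb 2 (cPr p {ω | L ω = false} {ω | X ω = x})) -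
        Pr p {ω | X ω = x ∧ A ω = a} *
          Real.logb 2 (Pr p {ω | X ω = x ∧ A ω = a} /
            (Pr p {ω | X ω = x} * Pr p {ω | A ω = a})) =
      Pr p {ω | X ω = x ∧ A ω = a} *
        Real.logb 2 (Pr p {ω | A ω = a} / q a) := by
    intro x a
    rcases eq_or_lt_of_le (Pr_nonneg' p hp {ω | X ω = x ∧ A ω = a}) with h0 | hxa
    · rw [← h0]; ring
    · have hN : 0 < Pr p ({ω | L ω = false} ∩ {ω | X ω = x ∧ A ω = a}) := hnumpos x a hxa
      have hNx : 0 < Pr p ({ω | L ω = false} ∩ {ω | X ω = x}) :=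
        lt_of_lt_of_le hN (Pr_mono' p hp
          (Set.inter_subset_inter_right _ (fun ω h => h.1)))
      have hPxpos : 0 < Pr p {ω | X ω = x} :=
        lt_of_lt_of_le hxa (Pr_mono' p hp (fun ω h => h.1))
      have hPapos : 0 < Pr p {ω | A ω = a} := by
        rw [hPa a]
        exact lt_of_lt_of_le hxa
          (Finset.single_le_sum (f := fun x' => Pr p {ω | X ω = x' ∧ A ω = a})
            (fun x' _ => Pr_nonneg' p hp _) (Finset.mem_univ x))
      have hqa : 0 < q a :=
        div_pos (lt_of_lt_of_le hN (Pr_mono' p hp (fun ω h => ⟨h.2.2, h.1⟩))) hPL0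
      -- conditional independence gives the factorization
      have hsetx : {ω | X ω = x ∧ L ω = false} = {ω | L ω = false} ∩ {ω | X ω = x} := by
        ext ω; exact and_comm
      have hsetxa : {ω | A ω = a} ∩ {ω | X ω = x ∧ L ω = false} =
          {ω | L ω = false} ∩ {ω | X ω = x ∧ A ω = a} := by
        ext ω
        simp only [Set.mem_inter_iff, Set.mem_setOf_eq]
        tauto
      have hind := hindep a x (by rw [hsetx]; exact hNx)
      rw [cPr, cPr, hsetxa, hsetx] at hind
      have hNq : Pr p ({ω | L ω = false} ∩ {ω | X ω = x ∧ A ω = a}) =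
          q a * Pr p ({ω | L ω = false} ∩ {ω | X ω = x}) := by
        rw [div_eq_div_iff hNx.ne' hPL0.ne'] at hind
        rw [hqdef]
        field_simp
        linarith
      rw [cPr, cPr, Real.logb_div hN.ne' hxa.ne', Real.logb_div hNx.ne' hPxpos.ne',
        Real.logb_div hxa.ne' (mul_pos hPxpos hPapos).ne',
        Real.logb_mul hPxpos.ne' hPapos.ne',
        Real.logb_div hPapos.ne' hqa.ne',
        hNq, Real.logb_mul hqa.ne' hNx.ne']
      ring
  -- rewrite both suspicions as double sums
  have hs : ∀ (x : S) (a : T),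
      {ω | (X ω, A ω) = (x, a)} = {ω | X ω = x ∧ A ω = a} := by
    intro x a; ext ω; simp [Prod.ext_iff]
  have hsuspXA : susp p L (fun ω => (X ω, A ω)) =
      ∑ x, ∑ a, Pr p {ω | X ω = x ∧ A ω = a} *
        (-Real.logb 2 (cPr p {ω | L ω = false} {ω | X ω = x ∧ A ω = a})) := by
    rw [susp, Fintype.sum_prod_type]
    simp only [hs]
  have hsuspX : susp p L X =
      ∑ x, ∑ a, Pr p {ω | X ω = x ∧ A ω = a} *
        (-Real.logb 2 (cPr p {ω | L ω = false} {ω | X ω = x})) := by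
    rw [susp]
    exact Finset.sum_congr rfl fun x _ => by rw [hPx x, Finset.sum_mul]
  -- the KL-divergence term
  have hKL : 0 ≤ ∑ a, Pr p {ω | A ω = a} * Real.logb 2 (Pr p {ω | A ω = a} / q a) := by
    refine gibbs' (fun a => Pr p {ω | A ω = a}) q (fun a => Pr_nonneg' p hp _)
      hqnonneg ?_ hqsum.le hPasum
    intro a ha
    have hex : ∃ x, 0 < Pr p {ω | X ω = x ∧ A ω = a} := by
      by_contra hc
      push_neg at hc
      have hle : ∑ x, Pr p {ω | X ω = x ∧ A ω = a} ≤ 0 :=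
        Finset.sum_nonpos fun x _ => hc x
      rw [← hPa a] at hle
      linarith
    obtain ⟨x, hx⟩ := hex
    exact div_pos (lt_of_lt_of_le (hnumpos x a hx)
      (Pr_mono' p hp (fun ω h => ⟨h.2.2, h.1⟩))) hPL0
  -- put everything together
  rw [← sub_nonneg, hsuspXA, hsuspX, mutInfo, ← Finset.sum_sub_distrib,
    ← Finset.sum_sub_distrib]
  refine le_trans hKL (le_of_eq (Eq.symm ?_))
  calc ∑ x, ((∑ a, Pr p {ω | X ω = x ∧ A ω = a} *
          (-Real.logb 2 (cPr p {ω | L ω = false} {ω | X ω = x ∧ A ω = a}))) -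
        (∑ a, Pr p {ω | X ω = x ∧ A ω = a} *
          (-Real.logb 2 (cPr p {ω | L ω = false} {ω | X ω = x}))) -
        ∑ a, Pr p {ω | X ω = x ∧ A ω = a} *
          Real.logb 2 (Pr p {ω | X ω = x ∧ A ω = a} /
            (Pr p {ω | X ω = x} * Pr p {ω | A ω = a})))
      = ∑ x, ∑ a, Pr p {ω | X ω = x ∧ A ω = a} *
          Real.logb 2 (Pr p {ω | A ω = a} / q a) := by
        refine Finset.sum_congr rfl fun x _ => ?_
        rw [← Finset.sum_sub_distrib, ← Finset.sum_sub_distrib]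
        exact Finset.sum_congr rfl fun a _ => hkey x a
    _ = ∑ a, ∑ x, Pr p {ω | X ω = x ∧ A ω = a} *
          Real.logb 2 (Pr p {ω | A ω = a} / q a) := Finset.sum_comm
    _ = ∑ a, Pr p {ω | A ω = a} * Real.logb 2 (Pr p {ω | A ω = a} / q a) := by
        refine Finset.sum_congr rfl fun a _ => ?_
        rw [← Finset.sum_mul, ← hPa a]
end

section
/- Let L be a {0,1}-valued random variable and let X, T', T_k be random variables with finite ranges on the same probability space (T' plays the role of the previous transcript and T_k of the next message). Assume that for every value t' of T', conditioned on T'=t' and L=0 the message T_k is independent of X, i.e. Pr(T_k=a | X=x, T'=t', L=0) = Pr(T_k=a | T'=t', L=0) whenever Pr(X=x, T'=t', L=0) > 0, and assume Pr(L=0 | X=x, T'=t', T_k=a) > 0 whenever Pr(X=x, T'=t', T_k=a) > 0. Then the conditional mutual information satisfies I(X; T_k | T') ≤ susp(X, T', T_k) − susp(X, T'). -/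
open Finset

section SuspicionHelpers

variable {Ω : Type*} [Fintype Ω]

lemma Pr_congr' (p : Ω → ℝ) {E F : Set Ω} (h : ∀ ω, ω ∈ E ↔ ω ∈ F) : Pr p E = Pr p F := by
  rw [Set.ext h]

lemma Pr_fiber_sum {A : Type*} [Fintype A] (p : Ω → ℝ) (E : Ω → Prop) (f : Ω → A) :
    ∑ a, Pr p {ω | E ω ∧ f ω = a} = Pr p {ω | E ω} := by
  classical
  unfold Pr
  rw [Finset.sum_comm]
  refine Finset.sum_congr rfl fun ω _ => ?_
  by_cases hE : E ω
  · simp [Set.indicator_apply, hE]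
  · simp [Set.indicator_apply, hE]

lemma Pr_fiber_sum' {A : Type*} [Fintype A] (p : Ω → ℝ) (E : Ω → Prop) (f : Ω → A)
    (G : A → Set Ω) (hG : ∀ a ω, ω ∈ G a ↔ (E ω ∧ f ω = a)) :
    ∑ a, Pr p (G a) = Pr p {ω | E ω} := by
  rw [Finset.sum_congr rfl fun a _ => Pr_congr' p (hG a)]
  exact Pr_fiber_sum p E f

lemma jensen_aux {A : Type*} [Fintype A] (q r : A → ℝ) (hq : ∀ a, 0 ≤ q a)
    (hr : ∀ a, 0 ≤ r a) (himp : ∀ a, 0 < r a → 0 < q a) :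
    ∑ a, r a * Real.logb 2 ((∑ b, r b) * q a / (r a * (∑ b, q b))) ≤ 0 := by
  classical
  have hlog2 : (0:ℝ) < Real.log 2 := Real.log_pos one_lt_two
  set R := ∑ b, r b with hR
  set Q := ∑ b, q b with hQ
  have hRnn : 0 ≤ R := Finset.sum_nonneg fun b _ => hr b
  rcases eq_or_lt_of_le hRnn with hR0 | hRpos
  · have hall : ∀ a, r a = 0 := fun a =>
      (Finset.sum_eq_zero_iff_of_nonneg (fun b _ => hr b)).mp hR0.symm a (mem_univ a)
    simp [hall]
  · obtain ⟨a0, ha0⟩ : ∃ a, 0 < r a := by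
      by_contra h; push_neg at h
      have : R ≤ 0 := Finset.sum_nonpos fun b _ => h b
      linarith
    have hQpos : 0 < Q :=
      lt_of_lt_of_le (himp a0 ha0) (Finset.single_le_sum (fun b _ => hq b) (mem_univ a0))
    have hterm : ∀ a, r a * Real.logb 2 (R * q a / (r a * Q)) ≤
        (R * q a / Q - r a) / Real.log 2 := by
      intro a
      rcases eq_or_lt_of_le (hr a) with h0 | hpos
      · rw [← h0, zero_mul, sub_zero]
        have := hq a
        positivity
      · have hqa := himp a hpos
        have hx : 0 < R * q a / (r a * Q) := by positivity
        have hle : Real.log (R * q a / (r a * Q)) ≤ R * q a / (r a * Q) - 1 :=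
          Real.log_le_sub_one_of_pos hx
        have h1 : r a * Real.logb 2 (R * q a / (r a * Q)) ≤
            r a * ((R * q a / (r a * Q) - 1) / Real.log 2) := by
          rw [Real.logb]
          gcongr
        have h2 : r a * ((R * q a / (r a * Q) - 1) / Real.log 2) =
            (R * q a / Q - r a) / Real.log 2 := by
          field_simp
        linarith
    calc ∑ a, r a * Real.logb 2 (R * q a / (r a * Q))
        ≤ ∑ a, (R * q a / Q - r a) / Real.log 2 := Finset.sum_le_sum fun a _ => hterm a
      _ = (R * Q / Q - R) / Real.log 2 := by
          rw [← Finset.sum_div]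
          congr 1
          rw [Finset.sum_sub_distrib]
          congr 1
          rw [← Finset.sum_div, ← Finset.mul_sum]
      _ = 0 := by
          rw [mul_div_assoc, div_self (ne_of_gt hQpos)]
          simp

end SuspicionHelpers

/-- for a next message `Tk` sent after previous transcript `T'`,
`I(X; T_k | T') ≤ susp(X, T', T_k) − susp(X, T')`. -/
theorem cond_info_le_susp_increase {Ω S U M : Type*}
    [Fintype Ω] [Fintype S] [Fintype U] [Fintype M]
    (p : Ω → ℝ) (hp : ∀ ω, 0 ≤ p ω) (hp1 : ∑ ω, p ω = 1)
    (X : Ω → S) (T' : Ω → U) (Tk : Ω → M) (L : Ω → Bool)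
    (hindep : ∀ (t' : U) (a : M) (x : S),
      0 < Pr p {ω | X ω = x ∧ T' ω = t' ∧ L ω = false} →
      cPr p {ω | Tk ω = a} {ω | X ω = x ∧ T' ω = t' ∧ L ω = false} =
        cPr p {ω | Tk ω = a} {ω | T' ω = t' ∧ L ω = false})
    (hpos : ∀ (x : S) (t' : U) (a : M),
      0 < Pr p {ω | X ω = x ∧ T' ω = t' ∧ Tk ω = a} →
      0 < cPr p {ω | L ω = false} {ω | X ω = x ∧ T' ω = t' ∧ Tk ω = a}) :
    condMutInfo p X Tk T' ≤
      susp p L (fun ω => (X ω, T' ω, Tk ω)) - susp p L (fun ω => (X ω, T' ω)) := by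
  classical
  -- fiber sums
  have hfibP2 : ∀ (x : S) (t' : U),
      ∑ a, Pr p {ω | X ω = x ∧ T' ω = t' ∧ Tk ω = a} = Pr p {ω | X ω = x ∧ T' ω = t'} :=
    fun x t' => Pr_fiber_sum' p (fun ω => X ω = x ∧ T' ω = t') Tk _
      (fun a ω => by simp only [Set.mem_setOf_eq]; try tauto)
  have hfibPAT : ∀ (t' : U) (a : M),
      ∑ x, Pr p {ω | X ω = x ∧ T' ω = t' ∧ Tk ω = a} = Pr p {ω | Tk ω = a ∧ T' ω = t'} :=
    fun t' a => Pr_fiber_sum' p (fun ω => Tk ω = a ∧ T' ω = t') X _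
      (fun x ω => by simp only [Set.mem_setOf_eq]; try tauto)
  have hfibPT : ∀ t' : U,
      ∑ a, Pr p {ω | Tk ω = a ∧ T' ω = t'} = Pr p {ω | T' ω = t'} :=
    fun t' => Pr_fiber_sum' p (fun ω => T' ω = t') Tk _
      (fun a ω => by simp only [Set.mem_setOf_eq]; try tauto)
  have hfibQT : ∀ t' : U,
      ∑ a, Pr p {ω | L ω = false ∧ T' ω = t' ∧ Tk ω = a} =
        Pr p {ω | L ω = false ∧ T' ω = t'} :=
    fun t' => Pr_fiber_sum' p (fun ω => L ω = false ∧ T' ω = t') Tk _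
      (fun a ω => by simp only [Set.mem_setOf_eq]; try tauto)
  -- rewrite susp (X,T',Tk)
  have e1 : susp p L (fun ω => (X ω, T' ω, Tk ω)) =
      ∑ t' : U, ∑ x : S, ∑ a : M,
        Pr p {ω | X ω = x ∧ T' ω = t' ∧ Tk ω = a} *
          (-Real.logb 2 (Pr p {ω | L ω = false ∧ X ω = x ∧ T' ω = t' ∧ Tk ω = a} /
            Pr p {ω | X ω = x ∧ T' ω = t' ∧ Tk ω = a})) := by
    unfold susp cPr
    rw [Fintype.sum_prod_type]
    have h1 : ∀ x : S, ∑ z : U × M,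
        Pr p {ω | (X ω, T' ω, Tk ω) = (x, z)} *
          (-Real.logb 2 (Pr p ({ω | L ω = false} ∩ {ω | (X ω, T' ω, Tk ω) = (x, z)}) /
            Pr p {ω | (X ω, T' ω, Tk ω) = (x, z)})) =
        ∑ t' : U, ∑ a : M,
          Pr p {ω | X ω = x ∧ T' ω = t' ∧ Tk ω = a} *
            (-Real.logb 2 (Pr p {ω | L ω = false ∧ X ω = x ∧ T' ω = t' ∧ Tk ω = a} /
              Pr p {ω | X ω = x ∧ T' ω = t' ∧ Tk ω = a})) := by
      intro x
      rw [Fintype.sum_prod_type]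
      refine Finset.sum_congr rfl fun t' _ => Finset.sum_congr rfl fun a _ => ?_
      rw [Pr_congr' p (E := {ω | (X ω, T' ω, Tk ω) = (x, t', a)})
          (F := {ω | X ω = x ∧ T' ω = t' ∧ Tk ω = a}) (fun ω => by simp [Prod.ext_iff]),
        Pr_congr' p (E := {ω | L ω = false} ∩ {ω | (X ω, T' ω, Tk ω) = (x, t', a)})
          (F := {ω | L ω = false ∧ X ω = x ∧ T' ω = t' ∧ Tk ω = a})
          (fun ω => by simp [Prod.ext_iff, Set.mem_inter_iff])]
    rw [Finset.sum_congr rfl fun x _ => h1 x]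
    exact Finset.sum_comm
  -- rewrite susp (X,T')
  have e2 : susp p L (fun ω => (X ω, T' ω)) =
      ∑ t' : U, ∑ x : S, ∑ a : M,
        Pr p {ω | X ω = x ∧ T' ω = t' ∧ Tk ω = a} *
          (-Real.logb 2 (Pr p {ω | L ω = false ∧ X ω = x ∧ T' ω = t'} /
            Pr p {ω | X ω = x ∧ T' ω = t'})) := by
    unfold susp cPr
    rw [Fintype.sum_prod_type]
    have h1 : ∀ x : S, ∑ t' : U,
        Pr p {ω | (X ω, T' ω) = (x, t')} *
          (-Real.logb 2 (Pr p ({ω | L ω = false} ∩ {ω | (X ω, T' ω) = (x, t')}) /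
            Pr p {ω | (X ω, T' ω) = (x, t')})) =
        ∑ t' : U, ∑ a : M,
          Pr p {ω | X ω = x ∧ T' ω = t' ∧ Tk ω = a} *
            (-Real.logb 2 (Pr p {ω | L ω = false ∧ X ω = x ∧ T' ω = t'} /
              Pr p {ω | X ω = x ∧ T' ω = t'})) := by
      intro x
      refine Finset.sum_congr rfl fun t' _ => ?_
      rw [Pr_congr' p (E := {ω | (X ω, T' ω) = (x, t')})
          (F := {ω | X ω = x ∧ T' ω = t'}) (fun ω => by simp [Prod.ext_iff]),
        Pr_congr' p (E := {ω | L ω = false} ∩ {ω | (X ω, T' ω) = (x, t')})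
          (F := {ω | L ω = false ∧ X ω = x ∧ T' ω = t'})
          (fun ω => by simp [Prod.ext_iff, Set.mem_inter_iff])]
      rw [← hfibP2 x t', Finset.sum_mul]
    rw [Finset.sum_congr rfl fun x _ => h1 x]
    exact Finset.sum_comm
  -- rewrite condMutInfo
  have e3 : condMutInfo p X Tk T' =
      ∑ t' : U, ∑ x : S, ∑ a : M,
        Pr p {ω | X ω = x ∧ T' ω = t' ∧ Tk ω = a} *
          Real.logb 2 ((Pr p {ω | X ω = x ∧ T' ω = t' ∧ Tk ω = a} * Pr p {ω | T' ω = t'}) /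
            (Pr p {ω | X ω = x ∧ T' ω = t'} * Pr p {ω | Tk ω = a ∧ T' ω = t'})) := by
    unfold condMutInfo
    refine Finset.sum_congr rfl fun t' _ => Finset.sum_congr rfl fun x _ =>
      Finset.sum_congr rfl fun a _ => ?_
    rw [Pr_congr' p (E := {ω | X ω = x ∧ Tk ω = a ∧ T' ω = t'})
        (F := {ω | X ω = x ∧ T' ω = t' ∧ Tk ω = a}) (fun ω => by simp only [Set.mem_setOf_eq]; try tauto)]
  rw [e1, e2, e3, ← Finset.sum_sub_distrib]
  refine Finset.sum_le_sum fun t' _ => ?_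
  -- per-transcript-prefix inequality
  have hkey : ∀ (x : S) (a : M),
      Pr p {ω | X ω = x ∧ T' ω = t' ∧ Tk ω = a} *
        Real.logb 2 ((Pr p {ω | X ω = x ∧ T' ω = t' ∧ Tk ω = a} * Pr p {ω | T' ω = t'}) /
          (Pr p {ω | X ω = x ∧ T' ω = t'} * Pr p {ω | Tk ω = a ∧ T' ω = t'})) -
      (Pr p {ω | X ω = x ∧ T' ω = t' ∧ Tk ω = a} *
          (-Real.logb 2 (Pr p {ω | L ω = false ∧ X ω = x ∧ T' ω = t' ∧ Tk ω = a} /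
            Pr p {ω | X ω = x ∧ T' ω = t' ∧ Tk ω = a})) -
        Pr p {ω | X ω = x ∧ T' ω = t' ∧ Tk ω = a} *
          (-Real.logb 2 (Pr p {ω | L ω = false ∧ X ω = x ∧ T' ω = t'} /
            Pr p {ω | X ω = x ∧ T' ω = t'}))) =
      Pr p {ω | X ω = x ∧ T' ω = t' ∧ Tk ω = a} *
        Real.logb 2 ((Pr p {ω | T' ω = t'} * Pr p {ω | L ω = false ∧ T' ω = t' ∧ Tk ω = a}) /
          (Pr p {ω | Tk ω = a ∧ T' ω = t'} * Pr p {ω | L ω = false ∧ T' ω = t'})) := by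
    intro x a
    rcases eq_or_lt_of_le (Pr_nonneg' p hp {ω | X ω = x ∧ T' ω = t' ∧ Tk ω = a}) with h0 | hP3
    · rw [← h0]; ring
    · -- positivity of everything
      have hQ3 : 0 < Pr p {ω | L ω = false ∧ X ω = x ∧ T' ω = t' ∧ Tk ω = a} := by
        have h := hpos x t' a hP3
        unfold cPr at h
        rw [Pr_congr' p (E := {ω | L ω = false} ∩ {ω | X ω = x ∧ T' ω = t' ∧ Tk ω = a})
            (F := {ω | L ω = false ∧ X ω = x ∧ T' ω = t' ∧ Tk ω = a})
            (fun ω => by simp only [Set.mem_inter_iff, Set.mem_setOf_eq]; try tauto)] at h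
        rcases div_pos_iff.mp h with ⟨h1, _⟩ | ⟨_, h2⟩
        · exact h1
        · linarith
      have hQ2 : 0 < Pr p {ω | L ω = false ∧ X ω = x ∧ T' ω = t'} :=
        lt_of_lt_of_le hQ3 (Pr_mono' p hp fun ω hω => ⟨hω.1, hω.2.1, hω.2.2.1⟩)
      have hQA : 0 < Pr p {ω | L ω = false ∧ T' ω = t' ∧ Tk ω = a} :=
        lt_of_lt_of_le hQ3 (Pr_mono' p hp fun ω hω => ⟨hω.1, hω.2.2.1, hω.2.2.2⟩)
      have hQT : 0 < Pr p {ω | L ω = false ∧ T' ω = t'} :=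
        lt_of_lt_of_le hQ3 (Pr_mono' p hp fun ω hω => ⟨hω.1, hω.2.2.1⟩)
      have hP2 : 0 < Pr p {ω | X ω = x ∧ T' ω = t'} :=
        lt_of_lt_of_le hP3 (Pr_mono' p hp fun ω hω => ⟨hω.1, hω.2.1⟩)
      have hPAT : 0 < Pr p {ω | Tk ω = a ∧ T' ω = t'} :=
        lt_of_lt_of_le hP3 (Pr_mono' p hp fun ω hω => ⟨hω.2.2, hω.2.1⟩)
      have hPT : 0 < Pr p {ω | T' ω = t'} :=
        lt_of_lt_of_le hP3 (Pr_mono' p hp fun ω hω => hω.2.1)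
      -- independence
      have hQ2' : 0 < Pr p {ω | X ω = x ∧ T' ω = t' ∧ L ω = false} := by
        rw [Pr_congr' p (E := {ω | X ω = x ∧ T' ω = t' ∧ L ω = false})
            (F := {ω | L ω = false ∧ X ω = x ∧ T' ω = t'})
            (fun ω => by simp only [Set.mem_setOf_eq]; try tauto)]
        exact hQ2
      have hind := hindep t' a x hQ2'
      unfold cPr at hind
      rw [Pr_congr' p (E := {ω | Tk ω = a} ∩ {ω | X ω = x ∧ T' ω = t' ∧ L ω = false})
          (F := {ω | L ω = false ∧ X ω = x ∧ T' ω = t' ∧ Tk ω = a})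
          (fun ω => by simp only [Set.mem_inter_iff, Set.mem_setOf_eq]; try tauto),
        Pr_congr' p (E := {ω | X ω = x ∧ T' ω = t' ∧ L ω = false})
          (F := {ω | L ω = false ∧ X ω = x ∧ T' ω = t'})
          (fun ω => by simp only [Set.mem_setOf_eq]; try tauto),
        Pr_congr' p (E := {ω | Tk ω = a} ∩ {ω | T' ω = t' ∧ L ω = false})
          (F := {ω | L ω = false ∧ T' ω = t' ∧ Tk ω = a})
          (fun ω => by simp only [Set.mem_inter_iff, Set.mem_setOf_eq]; try tauto),
        Pr_congr' p (E := {ω | T' ω = t' ∧ L ω = false})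
          (F := {ω | L ω = false ∧ T' ω = t'})
          (fun ω => by simp only [Set.mem_setOf_eq]; try tauto)] at hind
      -- log identity
      have hloge : Real.log ((Pr p {ω | X ω = x ∧ T' ω = t' ∧ Tk ω = a} * Pr p {ω | T' ω = t'}) /
            (Pr p {ω | X ω = x ∧ T' ω = t'} * Pr p {ω | Tk ω = a ∧ T' ω = t'})) +
          Real.log (Pr p {ω | L ω = false ∧ X ω = x ∧ T' ω = t' ∧ Tk ω = a} /
            Pr p {ω | X ω = x ∧ T' ω = t' ∧ Tk ω = a}) -
          Real.log (Pr p {ω | L ω = false ∧ X ω = x ∧ T' ω = t'} /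
            Pr p {ω | X ω = x ∧ T' ω = t'}) =
          Real.log ((Pr p {ω | T' ω = t'} * Pr p {ω | L ω = false ∧ T' ω = t' ∧ Tk ω = a}) /
            (Pr p {ω | Tk ω = a ∧ T' ω = t'} * Pr p {ω | L ω = false ∧ T' ω = t'})) := by
        have h2 : Real.log (Pr p {ω | L ω = false ∧ X ω = x ∧ T' ω = t' ∧ Tk ω = a}) -
            Real.log (Pr p {ω | L ω = false ∧ X ω = x ∧ T' ω = t'}) =
            Real.log (Pr p {ω | L ω = false ∧ T' ω = t' ∧ Tk ω = a}) -
            Real.log (Pr p {ω | L ω = false ∧ T' ω = t'}) := by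
          rw [← Real.log_div (ne_of_gt hQ3) (ne_of_gt hQ2),
            ← Real.log_div (ne_of_gt hQA) (ne_of_gt hQT), hind]
        rw [Real.log_div (by positivity) (by positivity),
          Real.log_mul (ne_of_gt hP3) (ne_of_gt hPT),
          Real.log_mul (ne_of_gt hP2) (ne_of_gt hPAT),
          Real.log_div (ne_of_gt hQ3) (ne_of_gt hP3),
          Real.log_div (ne_of_gt hQ2) (ne_of_gt hP2),
          Real.log_div (by positivity) (by positivity),
          Real.log_mul (ne_of_gt hPT) (ne_of_gt hQA),
          Real.log_mul (ne_of_gt hPAT) (ne_of_gt hQT)]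
        linarith
      have hlogb : Real.logb 2 ((Pr p {ω | X ω = x ∧ T' ω = t' ∧ Tk ω = a} * Pr p {ω | T' ω = t'}) /
            (Pr p {ω | X ω = x ∧ T' ω = t'} * Pr p {ω | Tk ω = a ∧ T' ω = t'})) +
          Real.logb 2 (Pr p {ω | L ω = false ∧ X ω = x ∧ T' ω = t' ∧ Tk ω = a} /
            Pr p {ω | X ω = x ∧ T' ω = t' ∧ Tk ω = a}) -
          Real.logb 2 (Pr p {ω | L ω = false ∧ X ω = x ∧ T' ω = t'} /
            Pr p {ω | X ω = x ∧ T' ω = t'}) =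
          Real.logb 2 ((Pr p {ω | T' ω = t'} * Pr p {ω | L ω = false ∧ T' ω = t' ∧ Tk ω = a}) /
            (Pr p {ω | Tk ω = a ∧ T' ω = t'} * Pr p {ω | L ω = false ∧ T' ω = t'})) := by
        simp only [Real.logb]
        rw [← add_div, ← sub_div, hloge]
      linear_combination (Pr p {ω | X ω = x ∧ T' ω = t' ∧ Tk ω = a}) * hlogb
  rw [← sub_nonpos]
  have hcollect : (∑ x : S, ∑ a : M,
        Pr p {ω | X ω = x ∧ T' ω = t' ∧ Tk ω = a} *
          Real.logb 2 ((Pr p {ω | X ω = x ∧ T' ω = t' ∧ Tk ω = a} * Pr p {ω | T' ω = t'}) /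
            (Pr p {ω | X ω = x ∧ T' ω = t'} * Pr p {ω | Tk ω = a ∧ T' ω = t'}))) -
      ((∑ x : S, ∑ a : M,
        Pr p {ω | X ω = x ∧ T' ω = t' ∧ Tk ω = a} *
          (-Real.logb 2 (Pr p {ω | L ω = false ∧ X ω = x ∧ T' ω = t' ∧ Tk ω = a} /
            Pr p {ω | X ω = x ∧ T' ω = t' ∧ Tk ω = a}))) -
      (∑ x : S, ∑ a : M,
        Pr p {ω | X ω = x ∧ T' ω = t' ∧ Tk ω = a} *
          (-Real.logb 2 (Pr p {ω | L ω = false ∧ X ω = x ∧ T' ω = t'} /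
            Pr p {ω | X ω = x ∧ T' ω = t'})))) =
      ∑ a : M, Pr p {ω | Tk ω = a ∧ T' ω = t'} *
        Real.logb 2 ((Pr p {ω | T' ω = t'} * Pr p {ω | L ω = false ∧ T' ω = t' ∧ Tk ω = a}) /
          (Pr p {ω | Tk ω = a ∧ T' ω = t'} * Pr p {ω | L ω = false ∧ T' ω = t'})) := by
    rw [← Finset.sum_sub_distrib, ← Finset.sum_sub_distrib]
    have h1 : ∀ x : S, (∑ a : M,
          Pr p {ω | X ω = x ∧ T' ω = t' ∧ Tk ω = a} *
            Real.logb 2 ((Pr p {ω | X ω = x ∧ T' ω = t' ∧ Tk ω = a} * Pr p {ω | T' ω = t'}) /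
              (Pr p {ω | X ω = x ∧ T' ω = t'} * Pr p {ω | Tk ω = a ∧ T' ω = t'}))) -
        ((∑ a : M,
          Pr p {ω | X ω = x ∧ T' ω = t' ∧ Tk ω = a} *
            (-Real.logb 2 (Pr p {ω | L ω = false ∧ X ω = x ∧ T' ω = t' ∧ Tk ω = a} /
              Pr p {ω | X ω = x ∧ T' ω = t' ∧ Tk ω = a}))) -
        (∑ a : M,
          Pr p {ω | X ω = x ∧ T' ω = t' ∧ Tk ω = a} *
            (-Real.logb 2 (Pr p {ω | L ω = false ∧ X ω = x ∧ T' ω = t'} /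
              Pr p {ω | X ω = x ∧ T' ω = t'})))) =
        ∑ a : M, Pr p {ω | X ω = x ∧ T' ω = t' ∧ Tk ω = a} *
          Real.logb 2 ((Pr p {ω | T' ω = t'} * Pr p {ω | L ω = false ∧ T' ω = t' ∧ Tk ω = a}) /
            (Pr p {ω | Tk ω = a ∧ T' ω = t'} * Pr p {ω | L ω = false ∧ T' ω = t'})) := by
      intro x
      rw [← Finset.sum_sub_distrib, ← Finset.sum_sub_distrib]
      exact Finset.sum_congr rfl fun a _ => hkey x a
    rw [Finset.sum_congr rfl fun x _ => h1 x, Finset.sum_comm]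
    refine Finset.sum_congr rfl fun a _ => ?_
    rw [← Finset.sum_mul, hfibPAT t' a]
  rw [hcollect, ← hfibPT t', ← hfibQT t']
  refine jensen_aux (fun a => Pr p {ω | L ω = false ∧ T' ω = t' ∧ Tk ω = a})
    (fun a => Pr p {ω | Tk ω = a ∧ T' ω = t'})
    (fun a => Pr_nonneg' p hp _) (fun a => Pr_nonneg' p hp _) (fun a ha => ?_)
  -- r a > 0 → q a > 0
  have ha' : 0 < Pr p {ω | Tk ω = a ∧ T' ω = t'} := ha
  rw [← hfibPAT t' a] at ha'
  obtain ⟨x, -, hx⟩ := Finset.exists_lt_of_sum_lt (by simpa using ha' :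
    (∑ x : S, (0:ℝ)) < ∑ x, Pr p {ω | X ω = x ∧ T' ω = t' ∧ Tk ω = a})
  have h := hpos x t' a hx
  unfold cPr at h
  have hQ3 : 0 < Pr p {ω | L ω = false ∧ X ω = x ∧ T' ω = t' ∧ Tk ω = a} := by
    rw [Pr_congr' p (E := {ω | L ω = false} ∩ {ω | X ω = x ∧ T' ω = t' ∧ Tk ω = a})
        (F := {ω | L ω = false ∧ X ω = x ∧ T' ω = t' ∧ Tk ω = a})
        (fun ω => by simp only [Set.mem_inter_iff, Set.mem_setOf_eq]; try tauto)] at h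
    rcases div_pos_iff.mp h with ⟨h1, _⟩ | ⟨_, h2⟩
    · exact h1
    · linarith
  exact lt_of_lt_of_le hQ3 (Pr_mono' p hp fun ω hω => ⟨hω.1, hω.2.2.1, hω.2.2.2⟩)
end

section
/- Let X be a random variable with finite range, let L_1,…,L_n be {0,1}-valued random variables, and let T_1,…,T_m be random variables with finite ranges, all on a common probability space. Let j:{1,…,m}→{1,…,n} assign a speaker to each round, and assume for each round k: conditioned on the previous messages (T_1,…,T_{k−1}) = t^{k−1} and on L_{j(k)}=0, the message T_k is independent of X (i.e. Pr(T_k=a | X=x, T^{k−1}=t^{k−1}, L_{j(k)}=0) = Pr(T_k=a | T^{k−1}=t^{k−1}, L_{j(k)}=0) whenever the conditioning events have positive probability). Assume also Pr(L_i=0 | X=x, T=t) > 0 for every i and every (x,t) with Pr(X=x, T=t) > 0, where T=(T_1,…,T_m). Then I(X;T) ≤ Σ_{i=1}^n ( susp_i(X,T) − susp_i(X) ), where susp_i denotes suspicion computed with respect to L_i. -/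
open Finset

set_option linter.unusedSectionVars false

namespace Aux

variable {Ω : Type*} [Fintype Ω]

lemma Pr_nonneg {p : Ω → ℝ} (hp : ∀ ω, 0 ≤ p ω) (E : Set Ω) : 0 ≤ Pr p E :=
  Finset.sum_nonneg fun ω _ => Set.indicator_nonneg (fun a _ => hp a) ω

lemma Pr_mono {p : Ω → ℝ} (hp : ∀ ω, 0 ≤ p ω) {E F : Set Ω} (h : E ⊆ F) :
    Pr p E ≤ Pr p F :=
  Finset.sum_le_sum fun ω _ => Set.indicator_le_indicator_of_subset h hp ω

lemma Pr_univ {p : Ω → ℝ} (hp1 : ∑ ω, p ω = 1) : Pr p Set.univ = 1 := by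
  simpa [Pr] using hp1

lemma Pr_pos_of_mem {p : Ω → ℝ} (hp : ∀ ω, 0 ≤ p ω) {E : Set Ω} {ω : Ω}
    (hmem : ω ∈ E) (hω : 0 < p ω) : 0 < Pr p E := by
  have h1 : E.indicator p ω = p ω := Set.indicator_of_mem hmem p
  calc (0:ℝ) < p ω := hω
    _ = E.indicator p ω := h1.symm
    _ ≤ Pr p E := Finset.single_le_sum
        (fun i _ => Set.indicator_nonneg (fun a _ => hp a) i) (Finset.mem_univ ω)

lemma exists_pos_of_Pr_pos {p : Ω → ℝ} (hp : ∀ ω, 0 ≤ p ω) {E : Set Ω}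
    (h : 0 < Pr p E) : ∃ ω, ω ∈ E ∧ 0 < p ω := by
  by_contra hc
  push_neg at hc
  have hz : Pr p E = 0 := Finset.sum_eq_zero fun ω _ => by
    by_cases hm : ω ∈ E
    · have := le_antisymm (hc ω hm) (hp ω)
      simp [Set.indicator_of_mem hm, ← this]
    · simp [Set.indicator_of_notMem hm]
  rw [hz] at h; exact lt_irrefl _ h

lemma Pr_partition {A : Type*} [Fintype A] (p : Ω → ℝ) (E : Set Ω) (Y : Ω → A) :
    Pr p E = ∑ a : A, Pr p (E ∩ {ω | Y ω = a}) := by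
  classical
  unfold Pr
  rw [Finset.sum_comm]
  refine Finset.sum_congr rfl fun ω _ => ?_
  by_cases hm : ω ∈ E
  · rw [Set.indicator_of_mem hm, Finset.sum_eq_single (Y ω)]
    · exact (Set.indicator_of_mem (Set.mem_inter hm (show ω ∈ {ω' | Y ω' = Y ω} from rfl)) p).symm
    · intro b _ hb
      exact Set.indicator_of_notMem (fun hx => hb hx.2.symm) p
    · intro h; exact absurd (Finset.mem_univ _) h
  · rw [Set.indicator_of_notMem hm]
    exact (Finset.sum_eq_zero fun b _ =>
      Set.indicator_of_notMem (fun hx => hm hx.1) p).symm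

lemma sum_fiber {A : Type*} [Fintype A] (p : Ω → ℝ) (Y : Ω → A) (f : A → ℝ) :
    ∑ a : A, Pr p {ω | Y ω = a} * f a = ∑ ω, p ω * f (Y ω) := by
  classical
  unfold Pr
  simp_rw [Finset.sum_mul]
  rw [Finset.sum_comm]
  refine Finset.sum_congr rfl fun ω _ => ?_
  rw [Finset.sum_eq_single (Y ω)]
  · rw [Set.indicator_of_mem (by exact rfl : ω ∈ {ω' | Y ω' = Y ω})]
  · intro b _ hb
    have hnm : ω ∉ {ω' | Y ω' = b} := fun hx => hb hx.symm
    rw [Set.indicator_of_notMem hnm, zero_mul]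
  · intro h; exact absurd (Finset.mem_univ _) h

lemma gibbs {A : Type*} [Fintype A] (a b φ : A → ℝ)
    (ha : ∀ α, 0 ≤ a α) (hb : ∀ α, 0 ≤ b α)
    (hφ : ∀ α, 0 < a α → 0 < b α ∧ φ α = Real.logb 2 (b α / a α))
    (hs : ∑ α, b α ≤ ∑ α, a α) :
    ∑ α, a α * φ α ≤ 0 := by
  have hlog2 : (0:ℝ) < Real.log 2 := Real.log_pos (by norm_num)
  have hterm : ∀ α, a α * φ α ≤ (b α - a α) / Real.log 2 := by
    intro α
    rcases (ha α).eq_or_lt with h | h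
    · rw [← h, zero_mul, sub_zero]
      exact div_nonneg (hb α) hlog2.le
    · obtain ⟨hbα, hφα⟩ := hφ α h
      rw [hφα, Real.logb, div_eq_mul_inv (Real.log _)]
      have hlb : Real.log (b α / a α) ≤ b α / a α - 1 :=
        Real.log_le_sub_one_of_pos (div_pos hbα h)
      have : a α * Real.log (b α / a α) ≤ b α - a α := by
        have := mul_le_mul_of_nonneg_left hlb (le_of_lt h)
        calc a α * Real.log (b α / a α) ≤ a α * (b α / a α - 1) := this
          _ = b α - a α := by field_simp
      calc a α * (Real.log (b α / a α) * (Real.log 2)⁻¹)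
          = (a α * Real.log (b α / a α)) * (Real.log 2)⁻¹ := by ring
        _ ≤ (b α - a α) * (Real.log 2)⁻¹ := by
            exact mul_le_mul_of_nonneg_right this (by positivity)
        _ = (b α - a α) / Real.log 2 := by rw [div_eq_mul_inv]
  calc ∑ α, a α * φ α ≤ ∑ α, (b α - a α) / Real.log 2 :=
        Finset.sum_le_sum fun α _ => hterm α
    _ = (∑ α, b α - ∑ α, a α) / Real.log 2 := by
        rw [← Finset.sum_div, Finset.sum_sub_distrib]
    _ ≤ 0 := div_nonpos_of_nonpos_of_nonneg (by linarith) (le_of_lt hlog2)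

lemma key {M : Type*} [Fintype M] {p : Ω → ℝ} (hp : ∀ ω, 0 ≤ p ω)
    (P Lev : Set Ω) (f : Ω → M)
    (hsupp : ∀ a : M, 0 < Pr p (P ∩ {ω | f ω = a}) →
      0 < Pr p (P ∩ {ω | f ω = a} ∩ Lev)) :
    ∑ a : M, Pr p (P ∩ {ω | f ω = a}) *
      (Real.logb 2 (Pr p (P ∩ {ω | f ω = a} ∩ Lev) / Pr p (P ∩ {ω | f ω = a})) -
       Real.logb 2 (Pr p (P ∩ Lev) / Pr p P)) ≤ 0 := by
  classical
  have hWnn : 0 ≤ Pr p (P ∩ Lev) := Pr_nonneg hp _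
  have hsumW : ∑ α : M, Pr p (P ∩ {ω | f ω = α} ∩ Lev) = Pr p (P ∩ Lev) := by
    rw [Pr_partition p (P ∩ Lev) f]
    exact Finset.sum_congr rfl fun α _ => by rw [Set.inter_right_comm]
  refine gibbs (fun α => Pr p (P ∩ {ω | f ω = α}))
      (fun α => Pr p (P ∩ {ω | f ω = α} ∩ Lev) * Pr p P / Pr p (P ∩ Lev)) _
      (fun α => Pr_nonneg hp _)
      (fun α => div_nonneg (mul_nonneg (Pr_nonneg hp _) (Pr_nonneg hp _)) hWnn)
      ?_ ?_
  · intro α hα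
    have hw := hsupp α hα
    have hWpos : 0 < Pr p (P ∩ Lev) := lt_of_lt_of_le hw
      (Pr_mono hp (Set.inter_subset_inter_left Lev Set.inter_subset_left))
    have hP : 0 < Pr p P := lt_of_lt_of_le hα (Pr_mono hp Set.inter_subset_left)
    refine ⟨div_pos (mul_pos hw hP) hWpos, ?_⟩
    rw [div_div,
        Real.logb_div (mul_ne_zero (ne_of_gt hw) (ne_of_gt hP))
          (mul_ne_zero (ne_of_gt hWpos) (ne_of_gt hα)),
        Real.logb_mul (ne_of_gt hw) (ne_of_gt hP),
        Real.logb_mul (ne_of_gt hWpos) (ne_of_gt hα),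
        Real.logb_div (ne_of_gt hw) (ne_of_gt hα),
        Real.logb_div (ne_of_gt hWpos) (ne_of_gt hP)]
    ring
  · have hsa : ∑ α : M, Pr p (P ∩ {ω | f ω = α}) = Pr p P :=
      (Pr_partition p P f).symm
    rw [hsa]
    rcases hWnn.eq_or_lt with h0 | hpos
    · have hz : ∀ α : M, Pr p (P ∩ {ω | f ω = α} ∩ Lev) = 0 := fun α =>
        le_antisymm (le_trans
          (Pr_mono hp (Set.inter_subset_inter_left Lev
            (Set.inter_subset_left : P ∩ {ω | f ω = α} ⊆ P))) h0.symm.le)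
          (Pr_nonneg hp _)
      have : ∀ α : M, Pr p (P ∩ {ω | f ω = α} ∩ Lev) * Pr p P / Pr p (P ∩ Lev)
          = 0 := fun α => by rw [hz α, zero_mul, zero_div]
      rw [Finset.sum_congr rfl fun α _ => this α]
      simp [Pr_nonneg hp P]
    · rw [← Finset.sum_div, ← Finset.sum_mul, hsumW, mul_comm, mul_div_assoc,
        div_self (ne_of_gt hpos), mul_one]

end Aux
namespace Aux

def SVset {Ω M : Type*} {m : ℕ} (T : Fin m → Ω → M) (k : ℕ) (ω : Ω) : Set Ω :=
  {ω' | ∀ q : Fin m, (q : ℕ) < k → T q ω' = T q ω}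

def VO {Ω M : Type*} {m : ℕ} (T : Fin m → Ω → M) (k : ℕ) (ω : Ω) : Fin m → Option M :=
  fun q => if (q : ℕ) < k then some (T q ω) else none

variable {Ω S M : Type*} [Fintype Ω] {m n : ℕ}

lemma SVset_zero (T : Fin m → Ω → M) (ω : Ω) : SVset T 0 ω = Set.univ := by
  ext ω'; simp [SVset]

lemma SVset_mono (T : Fin m → Ω → M) (ω : Ω) {k k' : ℕ} (h : k ≤ k') :
    SVset T k' ω ⊆ SVset T k ω := fun ω' hω' q hq => hω' q (lt_of_lt_of_le hq h)

lemma mem_SVset_self (T : Fin m → Ω → M) (k : ℕ) (ω : Ω) : ω ∈ SVset T k ω :=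
  fun _ _ => rfl

lemma SVset_full (T : Fin m → Ω → M) (ω : Ω) :
    SVset T m ω = {ω' | ∀ q : Fin m, T q ω' = T q ω} := by
  ext ω'; exact ⟨fun h q => h q q.isLt, fun h q _ => h q⟩

lemma SVset_succ (T : Fin m → Ω → M) (k : Fin m) (ω : Ω) :
    SVset T (k : ℕ) ω ∩ {ω' | T k ω' = T k ω} = SVset T ((k : ℕ) + 1) ω := by
  ext ω'
  constructor
  · rintro ⟨h1, h2⟩ q hq
    rcases Nat.lt_succ_iff_lt_or_eq.mp hq with hq' | hq'
    · exact h1 q hq'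
    · have : q = k := Fin.ext hq'
      rw [this]; exact h2
  · intro h
    exact ⟨fun q hq => h q (Nat.lt_succ_of_lt hq), h k (Nat.lt_succ_self _)⟩

lemma VO_fiber (T : Fin m → Ω → M) (k : ℕ) (ω : Ω) :
    {ω' | VO T k ω' = VO T k ω} = SVset T k ω := by
  ext ω'
  simp only [Set.mem_setOf_eq, SVset, funext_iff, VO]
  constructor
  · intro h q hq
    have := h q
    rw [if_pos hq, if_pos hq] at this
    exact Option.some.inj this
  · intro h q
    by_cases hq : (q : ℕ) < k
    · rw [if_pos hq, if_pos hq, h q hq]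
    · rw [if_neg hq, if_neg hq]

section Quantities

variable (p : Ω → ℝ) (X : Ω → S) (L : Fin n → Ω → Bool) (T : Fin m → Ω → M)

noncomputable def NN (k : ℕ) (ω : Ω) : ℝ :=
  Pr p ({ω' | X ω' = X ω} ∩ SVset T k ω)

noncomputable def NLL (i : Fin n) (k : ℕ) (ω : Ω) : ℝ :=
  Pr p ({ω' | X ω' = X ω} ∩ SVset T k ω ∩ {ω' | L i ω' = false})

noncomputable def DD (k : ℕ) (ω : Ω) : ℝ :=
  Pr p (SVset T k ω)

noncomputable def DLL (i : Fin n) (k : ℕ) (ω : Ω) : ℝ :=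
  Pr p (SVset T k ω ∩ {ω' | L i ω' = false})

noncomputable def sS (i : Fin n) (k : ℕ) (ω : Ω) : ℝ :=
  -Real.logb 2 (NLL p X L T i k ω / NN p X T k ω)

end Quantities

end Aux
namespace Aux

variable {Ω S M : Type*} [Fintype Ω] {m n : ℕ}
variable {p : Ω → ℝ} (hp : ∀ ω, 0 ≤ p ω)
variable (X : Ω → S) (L : Fin n → Ω → Bool) (T : Fin m → Ω → M)

include hp

lemma NN_pos (k : ℕ) {ω : Ω} (hω : 0 < p ω) : 0 < NN p X T k ω :=
  Pr_pos_of_mem hp (Set.mem_inter rfl (mem_SVset_self T k ω)) hω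

lemma DD_pos (k : ℕ) {ω : Ω} (hω : 0 < p ω) : 0 < DD p T k ω :=
  Pr_pos_of_mem hp (mem_SVset_self T k ω) hω

lemma NLL_pos
    (hpos : ∀ (i : Fin n) (x : S) (t : Fin m → M),
      0 < Pr p {ω | X ω = x ∧ ∀ k, T k ω = t k} →
      0 < cPr p {ω | L i ω = false} {ω | X ω = x ∧ ∀ k, T k ω = t k})
    (i : Fin n) {k : ℕ} (hk : k ≤ m) {ω : Ω} (hω : 0 < p ω) :
    0 < NLL p X L T i k ω := by
  have hEfull : 0 < Pr p {ω' | X ω' = X ω ∧ ∀ q, T q ω' = T q ω} :=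
    Pr_pos_of_mem hp ⟨rfl, fun _ => rfl⟩ hω
  have hc := hpos i (X ω) (fun q => T q ω) hEfull
  unfold cPr at hc
  have hnum : 0 < Pr p ({ω' | L i ω' = false} ∩
      {ω' | X ω' = X ω ∧ ∀ q, T q ω' = T q ω}) := by
    rcases div_pos_iff.mp hc with ⟨h1, _⟩ | ⟨_, h2⟩
    · exact h1
    · exact absurd hEfull (by linarith)
  refine lt_of_lt_of_le hnum (Pr_mono hp ?_)
  rintro ω' ⟨hL, hX, hT⟩
  exact ⟨⟨hX, fun q _ => hT q⟩, hL⟩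

lemma DLL_pos
    (hpos : ∀ (i : Fin n) (x : S) (t : Fin m → M),
      0 < Pr p {ω | X ω = x ∧ ∀ k, T k ω = t k} →
      0 < cPr p {ω | L i ω = false} {ω | X ω = x ∧ ∀ k, T k ω = t k})
    (i : Fin n) {k : ℕ} (hk : k ≤ m) {ω : Ω} (hω : 0 < p ω) :
    0 < DLL p L T i k ω := by
  refine lt_of_lt_of_le (NLL_pos hp X L T hpos i hk hω) (Pr_mono hp ?_)
  rintro ω' ⟨⟨_, hV⟩, hL⟩
  exact ⟨hV, hL⟩

lemma NLL_mono (i : Fin n) {k k' : ℕ} (h : k ≤ k') (ω : Ω) :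
    NLL p X L T i k' ω ≤ NLL p X L T i k ω :=
  Pr_mono hp (Set.inter_subset_inter_left _
    (Set.inter_subset_inter_right _ (SVset_mono T ω h)))

lemma step_indep (j : Fin m → Fin n)
    (hindep : ∀ (k : Fin m) (x : S) (a : M) (t : Fin m → M),
      0 < Pr p {ω | X ω = x ∧ (∀ i, i < k → T i ω = t i) ∧ L (j k) ω = false} →
      cPr p {ω | T k ω = a}
          {ω | X ω = x ∧ (∀ i, i < k → T i ω = t i) ∧ L (j k) ω = false} =
        cPr p {ω | T k ω = a}
          {ω | (∀ i, i < k → T i ω = t i) ∧ L (j k) ω = false})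
    (hpos : ∀ (i : Fin n) (x : S) (t : Fin m → M),
      0 < Pr p {ω | X ω = x ∧ ∀ k, T k ω = t k} →
      0 < cPr p {ω | L i ω = false} {ω | X ω = x ∧ ∀ k, T k ω = t k})
    (k : Fin m) {ω : Ω} (hω : 0 < p ω) :
    NLL p X L T (j k) ((k : ℕ) + 1) ω * DLL p L T (j k) (k : ℕ) ω =
      NLL p X L T (j k) (k : ℕ) ω * DLL p L T (j k) ((k : ℕ) + 1) ω := by
  have hsetN : {ω' | X ω' = X ω ∧ (∀ i, i < k → T i ω' = T i ω) ∧ L (j k) ω' = false}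
      = {ω' | X ω' = X ω} ∩ SVset T (k : ℕ) ω ∩ {ω' | L (j k) ω' = false} := by
    ext ω'
    simp only [Set.mem_setOf_eq, Set.mem_inter_iff, SVset]
    constructor
    · rintro ⟨h1, h2, h3⟩; exact ⟨⟨h1, fun q hq => h2 q hq⟩, h3⟩
    · rintro ⟨⟨h1, h2⟩, h3⟩; exact ⟨h1, fun q hq => h2 q hq, h3⟩
  have hsetD : {ω' | (∀ i, i < k → T i ω' = T i ω) ∧ L (j k) ω' = false}
      = SVset T (k : ℕ) ω ∩ {ω' | L (j k) ω' = false} := by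
    ext ω'
    simp only [Set.mem_setOf_eq, Set.mem_inter_iff, SVset]
    exact Iff.rfl
  have hNk : 0 < NLL p X L T (j k) (k : ℕ) ω :=
    NLL_pos hp X L T hpos (j k) (le_of_lt k.isLt) hω
  have hDk : 0 < DLL p L T (j k) (k : ℕ) ω :=
    DLL_pos hp X L T hpos (j k) (le_of_lt k.isLt) hω
  have h := hindep k (X ω) (T k ω) (fun q => T q ω) (by
    rw [show Pr p {ω' | X ω' = X ω ∧ (∀ i, i < k → T i ω' = T i ω) ∧
        L (j k) ω' = false} = NLL p X L T (j k) (k : ℕ) ω from congrArg (Pr p) hsetN]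
    exact hNk)
  unfold cPr at h
  rw [hsetN, hsetD] at h
  have hnum1 : {ω' | T k ω' = T k ω} ∩
      ({ω' | X ω' = X ω} ∩ SVset T (k : ℕ) ω ∩ {ω' | L (j k) ω' = false}) =
      {ω' | X ω' = X ω} ∩ SVset T ((k : ℕ) + 1) ω ∩ {ω' | L (j k) ω' = false} := by
    rw [← SVset_succ T k ω]
    ext ω'
    simp only [Set.mem_inter_iff, Set.mem_setOf_eq]
    tauto
  have hnum2 : {ω' | T k ω' = T k ω} ∩
      (SVset T (k : ℕ) ω ∩ {ω' | L (j k) ω' = false}) =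
      SVset T ((k : ℕ) + 1) ω ∩ {ω' | L (j k) ω' = false} := by
    rw [← SVset_succ T k ω]
    ext ω'
    simp only [Set.mem_inter_iff, Set.mem_setOf_eq]
    tauto
  rw [hnum1, hnum2] at h
  have h' : NLL p X L T (j k) ((k : ℕ) + 1) ω / NLL p X L T (j k) (k : ℕ) ω =
      DLL p L T (j k) ((k : ℕ) + 1) ω / DLL p L T (j k) (k : ℕ) ω := h
  field_simp at h'
  linarith [h']

end Aux
namespace Aux

section Main

variable {Ω S M : Type*} [Fintype Ω] [Fintype S] [Fintype M] {n m : ℕ}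

lemma pair_fiber_set (X : Ω → S) (T : Fin m → Ω → M) (ω : Ω) :
    {ω' | (X ω', fun k => T k ω') = (X ω, fun k => T k ω)}
      = {ω' | X ω' = X ω} ∩ SVset T m ω := by
  ext ω'
  simp only [Set.mem_setOf_eq, Prod.mk.injEq, Set.mem_inter_iff, funext_iff, SVset]
  constructor
  · rintro ⟨h1, h2⟩; exact ⟨h1, fun q _ => h2 q⟩
  · rintro ⟨h1, h2⟩; exact ⟨h1, fun q => h2 q q.isLt⟩

lemma tuple_fiber_set (T : Fin m → Ω → M) (ω : Ω) :
    {ω' | (fun k => T k ω') = (fun k => T k ω)} = SVset T m ω := by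
  ext ω'
  simp only [Set.mem_setOf_eq, funext_iff, SVset]
  exact ⟨fun h q _ => h q, fun h q => h q q.isLt⟩

lemma conv_mutInfo (p : Ω → ℝ) (X : Ω → S) (T : Fin m → Ω → M) :
    mutInfo p X (fun ω k => T k ω) =
      ∑ ω, p ω * Real.logb 2 (NN p X T m ω / (NN p X T 0 ω * DD p T m ω)) := by
  have h1 : mutInfo p X (fun ω k => T k ω) =
      ∑ y : S × (Fin m → M), Pr p {ω | (X ω, fun k => T k ω) = y} *
        Real.logb 2 (Pr p {ω | (X ω, fun k => T k ω) = y} /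
          (Pr p {ω | X ω = y.1} * Pr p {ω | (fun k => T k ω) = y.2})) := by
    rw [mutInfo, Fintype.sum_prod_type]
    refine Finset.sum_congr rfl fun x _ => Finset.sum_congr rfl fun a _ => ?_
    dsimp only
    rw [show {ω | X ω = x ∧ (fun k => T k ω) = a}
        = {ω | (X ω, fun k => T k ω) = (x, a)} from by
      ext ω; simp [Prod.ext_iff]]
  rw [h1]
  refine (sum_fiber p (fun ω => (X ω, fun k => T k ω))
      (fun y => Real.logb 2 (Pr p {ω | (X ω, fun k => T k ω) = y} /
        (Pr p {ω | X ω = y.1} * Pr p {ω | (fun k => T k ω) = y.2})))).trans ?_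
  refine Finset.sum_congr rfl fun ω _ => ?_
  simp only [NN, DD, SVset_zero, Set.inter_univ]
  rw [pair_fiber_set X T ω, tuple_fiber_set T ω]

lemma conv_susp_pair (p : Ω → ℝ) (X : Ω → S) (L : Fin n → Ω → Bool)
    (T : Fin m → Ω → M) (i : Fin n) :
    susp p (L i) (fun ω => (X ω, fun k => T k ω)) = ∑ ω, p ω * sS p X L T i m ω := by
  rw [susp]
  refine (sum_fiber p (fun ω => (X ω, fun k => T k ω))
      (fun y => -Real.logb 2 (cPr p {ω | L i ω = false}
        {ω | (X ω, fun k => T k ω) = y}))).trans ?_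
  refine Finset.sum_congr rfl fun ω _ => ?_
  simp only [sS, NLL, NN, cPr]
  rw [pair_fiber_set X T ω, Set.inter_comm {ω' | L i ω' = false}]

lemma conv_susp_X (p : Ω → ℝ) (X : Ω → S) (L : Fin n → Ω → Bool)
    (T : Fin m → Ω → M) (i : Fin n) :
    susp p (L i) X = ∑ ω, p ω * sS p X L T i 0 ω := by
  rw [susp]
  refine (sum_fiber p X
      (fun y => -Real.logb 2 (cPr p {ω | L i ω = false} {ω | X ω = y}))).trans ?_
  refine Finset.sum_congr rfl fun ω _ => ?_
  simp only [sS, NLL, NN, cPr, SVset_zero, Set.inter_univ]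
  rw [Set.inter_comm {ω' | L i ω' = false}]

noncomputable def phiA (p : Ω → ℝ) (X : Ω → S) (L : Fin n → Ω → Bool)
    (T : Fin m → Ω → M) (i : Fin n) (k : Fin m)
    (y : S × ((Fin m → Option M) × M)) : ℝ :=
  -(Real.logb 2 (Pr p ({ω' | X ω' = y.1} ∩ {ω' | VO T (k : ℕ) ω' = y.2.1} ∩
        {ω' | T k ω' = y.2.2} ∩ {ω' | L i ω' = false}) /
      Pr p ({ω' | X ω' = y.1} ∩ {ω' | VO T (k : ℕ) ω' = y.2.1} ∩
        {ω' | T k ω' = y.2.2})) -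
    Real.logb 2 (Pr p ({ω' | X ω' = y.1} ∩ {ω' | VO T (k : ℕ) ω' = y.2.1} ∩
        {ω' | L i ω' = false}) /
      Pr p ({ω' | X ω' = y.1} ∩ {ω' | VO T (k : ℕ) ω' = y.2.1})))

noncomputable def phiB (p : Ω → ℝ) (L : Fin n → Ω → Bool)
    (T : Fin m → Ω → M) (i : Fin n) (k : Fin m) (y : (Fin m → Option M) × M) : ℝ :=
  Real.logb 2 (Pr p ({ω' | VO T (k : ℕ) ω' = y.1} ∩ {ω' | T k ω' = y.2} ∩
        {ω' | L i ω' = false}) /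
      Pr p ({ω' | VO T (k : ℕ) ω' = y.1} ∩ {ω' | T k ω' = y.2})) -
    Real.logb 2 (Pr p ({ω' | VO T (k : ℕ) ω' = y.1} ∩ {ω' | L i ω' = false}) /
      Pr p {ω' | VO T (k : ℕ) ω' = y.1})

variable {p : Ω → ℝ} (hp : ∀ ω, 0 ≤ p ω)
variable (X : Ω → S) (L : Fin n → Ω → Bool) (T : Fin m → Ω → M)

include hp

lemma conv_A
    (hpos : ∀ (i : Fin n) (x : S) (t : Fin m → M),
      0 < Pr p {ω | X ω = x ∧ ∀ k, T k ω = t k} →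
      0 < cPr p {ω | L i ω = false} {ω | X ω = x ∧ ∀ k, T k ω = t k})
    (i : Fin n) (k : Fin m) :
    0 ≤ ∑ ω, p ω * (sS p X L T i ((k : ℕ) + 1) ω - sS p X L T i (k : ℕ) ω) := by
  have hpt : ∀ ω, sS p X L T i ((k : ℕ) + 1) ω - sS p X L T i (k : ℕ) ω
      = phiA p X L T i k (X ω, (VO T (k : ℕ) ω, T k ω)) := by
    intro ω
    have h1 : {ω' | X ω' = X ω} ∩ {ω' | VO T (k : ℕ) ω' = VO T (k : ℕ) ω}
        = {ω' | X ω' = X ω} ∩ SVset T (k : ℕ) ω := by rw [VO_fiber]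
    have h2 : {ω' | X ω' = X ω} ∩ {ω' | VO T (k : ℕ) ω' = VO T (k : ℕ) ω} ∩
        {ω' | T k ω' = T k ω} = {ω' | X ω' = X ω} ∩ SVset T ((k : ℕ) + 1) ω := by
      rw [h1, Set.inter_assoc, SVset_succ]
    simp only [phiA]
    rw [h2, h1]
    simp only [sS, NLL, NN]
    ring
  have hEQ : ∑ ω, p ω * (sS p X L T i ((k : ℕ) + 1) ω - sS p X L T i (k : ℕ) ω)
      = ∑ x : S, ∑ v : Fin m → Option M, ∑ a : M,
          Pr p ({ω' | X ω' = x} ∩ {ω' | VO T (k : ℕ) ω' = v} ∩ {ω' | T k ω' = a}) *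
            phiA p X L T i k (x, (v, a)) := by
    rw [Finset.sum_congr rfl fun ω _ => by rw [hpt ω]]
    rw [← sum_fiber p (fun ω => (X ω, (VO T (k : ℕ) ω, T k ω))) (phiA p X L T i k)]
    rw [Fintype.sum_prod_type]
    refine Finset.sum_congr rfl fun x _ => ?_
    rw [Fintype.sum_prod_type]
    refine Finset.sum_congr rfl fun v _ => Finset.sum_congr rfl fun a _ => ?_
    congr 1
    refine congrArg (Pr p) ?_
    ext ω
    simp only [Set.mem_setOf_eq, Prod.mk.injEq, Set.mem_inter_iff]
    tauto
  rw [hEQ]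
  refine Finset.sum_nonneg fun x _ => Finset.sum_nonneg fun v _ => ?_
  have hsupp : ∀ a : M,
      0 < Pr p ({ω' | X ω' = x} ∩ {ω' | VO T (k : ℕ) ω' = v} ∩ {ω' | T k ω' = a}) →
      0 < Pr p ({ω' | X ω' = x} ∩ {ω' | VO T (k : ℕ) ω' = v} ∩ {ω' | T k ω' = a}
          ∩ {ω' | L i ω' = false}) := by
    intro a ha
    obtain ⟨ω₀, hmem, hp₀⟩ := exists_pos_of_Pr_pos hp ha
    obtain ⟨⟨hx, hv⟩, hta⟩ := hmem
    rw [← hx, ← hv, ← hta]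
    have hset : {ω' | X ω' = X ω₀} ∩ {ω' | VO T (k : ℕ) ω' = VO T (k : ℕ) ω₀} ∩
        {ω' | T k ω' = T k ω₀} = {ω' | X ω' = X ω₀} ∩ SVset T ((k : ℕ) + 1) ω₀ := by
      rw [VO_fiber, Set.inter_assoc, SVset_succ]
    rw [hset]
    have := NLL_pos hp X L T hpos i (Nat.succ_le_of_lt k.isLt) hp₀
    simpa only [NLL] using this
  have hkey := key hp ({ω' | X ω' = x} ∩ {ω' | VO T (k : ℕ) ω' = v})
    {ω' | L i ω' = false} (T k) hsupp
  have hneg : ∑ a : M,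
      Pr p ({ω' | X ω' = x} ∩ {ω' | VO T (k : ℕ) ω' = v} ∩ {ω' | T k ω' = a}) *
        phiA p X L T i k (x, (v, a)) =
      -(∑ a : M,
        Pr p (({ω' | X ω' = x} ∩ {ω' | VO T (k : ℕ) ω' = v}) ∩ {ω | T k ω = a}) *
          (Real.logb 2 (Pr p (({ω' | X ω' = x} ∩ {ω' | VO T (k : ℕ) ω' = v}) ∩
              {ω | T k ω = a} ∩ {ω' | L i ω' = false}) /
            Pr p (({ω' | X ω' = x} ∩ {ω' | VO T (k : ℕ) ω' = v}) ∩ {ω | T k ω = a})) -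
           Real.logb 2 (Pr p (({ω' | X ω' = x} ∩ {ω' | VO T (k : ℕ) ω' = v}) ∩
              {ω' | L i ω' = false}) /
            Pr p ({ω' | X ω' = x} ∩ {ω' | VO T (k : ℕ) ω' = v})))) := by
    rw [← Finset.sum_neg_distrib]
    refine Finset.sum_congr rfl fun a _ => ?_
    simp only [phiA, Set.inter_assoc]
    ring
  rw [hneg]
  linarith [hkey]

end Main

end Aux
namespace Aux

section Main2

variable {Ω S M : Type*} [Fintype Ω] [Fintype S] [Fintype M] {n m : ℕ}

lemma telescope (g : ℕ → ℝ) :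
    ∑ k : Fin m, (g ((k : ℕ) + 1) - g (k : ℕ)) = g m - g 0 := by
  rw [Fin.sum_univ_eq_sum_range (fun k => g (k + 1) - g k) m]
  exact Finset.sum_range_sub g m

variable {p : Ω → ℝ} (hp : ∀ ω, 0 ≤ p ω)
variable (X : Ω → S) (L : Fin n → Ω → Bool) (T : Fin m → Ω → M)

include hp

lemma conv_B
    (hpos : ∀ (i : Fin n) (x : S) (t : Fin m → M),
      0 < Pr p {ω | X ω = x ∧ ∀ k, T k ω = t k} →
      0 < cPr p {ω | L i ω = false} {ω | X ω = x ∧ ∀ k, T k ω = t k})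
    (i : Fin n) (k : Fin m) :
    ∑ ω, p ω * (Real.logb 2 (DLL p L T i ((k : ℕ) + 1) ω / DD p T ((k : ℕ) + 1) ω) -
      Real.logb 2 (DLL p L T i (k : ℕ) ω / DD p T (k : ℕ) ω)) ≤ 0 := by
  have hpt : ∀ ω,
      Real.logb 2 (DLL p L T i ((k : ℕ) + 1) ω / DD p T ((k : ℕ) + 1) ω) -
        Real.logb 2 (DLL p L T i (k : ℕ) ω / DD p T (k : ℕ) ω)
      = phiB p L T i k (VO T (k : ℕ) ω, T k ω) := by
    intro ω
    have h1 : {ω' | VO T (k : ℕ) ω' = VO T (k : ℕ) ω} = SVset T (k : ℕ) ω :=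
      VO_fiber T (k : ℕ) ω
    have h2 : {ω' | VO T (k : ℕ) ω' = VO T (k : ℕ) ω} ∩ {ω' | T k ω' = T k ω}
        = SVset T ((k : ℕ) + 1) ω := by rw [h1, SVset_succ]
    simp only [phiB]
    rw [h2, h1]
    simp only [DLL, DD]
  have hEQ : ∑ ω, p ω *
      (Real.logb 2 (DLL p L T i ((k : ℕ) + 1) ω / DD p T ((k : ℕ) + 1) ω) -
       Real.logb 2 (DLL p L T i (k : ℕ) ω / DD p T (k : ℕ) ω))
      = ∑ v : Fin m → Option M, ∑ a : M,
          Pr p ({ω' | VO T (k : ℕ) ω' = v} ∩ {ω' | T k ω' = a}) *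
            phiB p L T i k (v, a) := by
    rw [Finset.sum_congr rfl fun ω _ => by rw [hpt ω]]
    rw [← sum_fiber p (fun ω => (VO T (k : ℕ) ω, T k ω)) (phiB p L T i k)]
    rw [Fintype.sum_prod_type]
    refine Finset.sum_congr rfl fun v _ => Finset.sum_congr rfl fun a _ => ?_
    congr 1
    refine congrArg (Pr p) ?_
    ext ω
    simp only [Set.mem_setOf_eq, Prod.mk.injEq, Set.mem_inter_iff]
  rw [hEQ]
  refine Finset.sum_nonpos fun v _ => ?_
  have hsupp : ∀ a : M,
      0 < Pr p ({ω' | VO T (k : ℕ) ω' = v} ∩ {ω | T k ω = a}) →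
      0 < Pr p ({ω' | VO T (k : ℕ) ω' = v} ∩ {ω | T k ω = a}
          ∩ {ω' | L i ω' = false}) := by
    intro a ha
    obtain ⟨ω₀, hmem, hp₀⟩ := exists_pos_of_Pr_pos hp ha
    obtain ⟨hv, hta⟩ := hmem
    rw [← hv, ← hta]
    have hset : {ω' | VO T (k : ℕ) ω' = VO T (k : ℕ) ω₀} ∩
        {ω | T k ω = T k ω₀} = SVset T ((k : ℕ) + 1) ω₀ := by
      rw [VO_fiber, ← SVset_succ]
    rw [hset]
    have := DLL_pos hp X L T hpos i (Nat.succ_le_of_lt k.isLt) hp₀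
    simpa only [DLL] using this
  have hkey := key hp {ω' | VO T (k : ℕ) ω' = v} {ω' | L i ω' = false} (T k) hsupp
  refine le_trans (le_of_eq ?_) hkey
  refine Finset.sum_congr rfl fun a _ => ?_
  simp only [phiB]

lemma perk (j : Fin m → Fin n)
    (hindep : ∀ (k : Fin m) (x : S) (a : M) (t : Fin m → M),
      0 < Pr p {ω | X ω = x ∧ (∀ i, i < k → T i ω = t i) ∧ L (j k) ω = false} →
      cPr p {ω | T k ω = a}
          {ω | X ω = x ∧ (∀ i, i < k → T i ω = t i) ∧ L (j k) ω = false} =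
        cPr p {ω | T k ω = a}
          {ω | (∀ i, i < k → T i ω = t i) ∧ L (j k) ω = false})
    (hpos : ∀ (i : Fin n) (x : S) (t : Fin m → M),
      0 < Pr p {ω | X ω = x ∧ ∀ k, T k ω = t k} →
      0 < cPr p {ω | L i ω = false} {ω | X ω = x ∧ ∀ k, T k ω = t k})
    (k : Fin m) {ω : Ω} (hω : 0 < p ω) :
    (sS p X L T (j k) ((k : ℕ) + 1) ω - sS p X L T (j k) (k : ℕ) ω) +
      (Real.logb 2 (DLL p L T (j k) ((k : ℕ) + 1) ω / DD p T ((k : ℕ) + 1) ω) -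
       Real.logb 2 (DLL p L T (j k) (k : ℕ) ω / DD p T (k : ℕ) ω)) =
    Real.logb 2 (NN p X T ((k : ℕ) + 1) ω / DD p T ((k : ℕ) + 1) ω) -
      Real.logb 2 (NN p X T (k : ℕ) ω / DD p T (k : ℕ) ω) := by
  have hk1 : (k : ℕ) + 1 ≤ m := Nat.succ_le_of_lt k.isLt
  have hk0 : (k : ℕ) ≤ m := le_of_lt k.isLt
  have hN0 := NN_pos hp X T (k : ℕ) hω
  have hN1 := NN_pos hp X T ((k : ℕ) + 1) hω
  have hD0 := DD_pos hp T (k : ℕ) hω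
  have hD1 := DD_pos hp T ((k : ℕ) + 1) hω
  have hNL0 := NLL_pos hp X L T hpos (j k) hk0 hω
  have hNL1 := NLL_pos hp X L T hpos (j k) hk1 hω
  have hDL0 := DLL_pos hp X L T hpos (j k) hk0 hω
  have hDL1 := DLL_pos hp X L T hpos (j k) hk1 hω
  have hstep := step_indep hp X L T j hindep hpos k hω
  have hlog := congrArg (Real.logb 2) hstep
  rw [Real.logb_mul (ne_of_gt hNL1) (ne_of_gt hDL0),
      Real.logb_mul (ne_of_gt hNL0) (ne_of_gt hDL1)] at hlog
  simp only [sS]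
  rw [Real.logb_div (ne_of_gt hNL1) (ne_of_gt hN1),
      Real.logb_div (ne_of_gt hNL0) (ne_of_gt hN0),
      Real.logb_div (ne_of_gt hDL1) (ne_of_gt hD1),
      Real.logb_div (ne_of_gt hDL0) (ne_of_gt hD0),
      Real.logb_div (ne_of_gt hN1) (ne_of_gt hD1),
      Real.logb_div (ne_of_gt hN0) (ne_of_gt hD0)]
  linarith

lemma PIlemma (hp1 : ∑ ω, p ω = 1) (j : Fin m → Fin n)
    (hindep : ∀ (k : Fin m) (x : S) (a : M) (t : Fin m → M),
      0 < Pr p {ω | X ω = x ∧ (∀ i, i < k → T i ω = t i) ∧ L (j k) ω = false} →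
      cPr p {ω | T k ω = a}
          {ω | X ω = x ∧ (∀ i, i < k → T i ω = t i) ∧ L (j k) ω = false} =
        cPr p {ω | T k ω = a}
          {ω | (∀ i, i < k → T i ω = t i) ∧ L (j k) ω = false})
    (hpos : ∀ (i : Fin n) (x : S) (t : Fin m → M),
      0 < Pr p {ω | X ω = x ∧ ∀ k, T k ω = t k} →
      0 < cPr p {ω | L i ω = false} {ω | X ω = x ∧ ∀ k, T k ω = t k})
    {ω : Ω} (hω : 0 < p ω) :
    Real.logb 2 (NN p X T m ω / (NN p X T 0 ω * DD p T m ω)) =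
      ∑ k : Fin m, ((sS p X L T (j k) ((k : ℕ) + 1) ω - sS p X L T (j k) (k : ℕ) ω) +
        (Real.logb 2 (DLL p L T (j k) ((k : ℕ) + 1) ω / DD p T ((k : ℕ) + 1) ω) -
         Real.logb 2 (DLL p L T (j k) (k : ℕ) ω / DD p T (k : ℕ) ω))) := by
  rw [Finset.sum_congr rfl fun k _ => perk hp X L T j hindep hpos k hω]
  rw [telescope (fun k => Real.logb 2 (NN p X T k ω / DD p T k ω))]
  have hD0 : DD p T 0 ω = 1 := by
    simp only [DD, SVset_zero]
    exact Pr_univ hp1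
  have hNm := NN_pos hp X T m hω
  have hN0 := NN_pos hp X T 0 hω
  have hDm := DD_pos hp T m hω
  rw [hD0, div_one,
      Real.logb_div (ne_of_gt hNm) (ne_of_gt (mul_pos hN0 hDm)),
      Real.logb_mul (ne_of_gt hN0) (ne_of_gt hDm),
      Real.logb_div (ne_of_gt hNm) (ne_of_gt hDm)]
  ring

end Main2

end Aux

/-- for a multi-round protocol with speaker assignment `j`,
`I(X;T) ≤ Σ_i (susp_i(X,T) − susp_i(X))`. -/
theorem info_le_total_susp_increase {Ω S M : Type*} [Fintype Ω] [Fintype S] [Fintype M]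
    {n m : ℕ}
    (p : Ω → ℝ) (hp : ∀ ω, 0 ≤ p ω) (hp1 : ∑ ω, p ω = 1)
    (X : Ω → S) (L : Fin n → Ω → Bool) (T : Fin m → Ω → M) (j : Fin m → Fin n)
    (hindep : ∀ (k : Fin m) (x : S) (a : M) (t : Fin m → M),
      0 < Pr p {ω | X ω = x ∧ (∀ i, i < k → T i ω = t i) ∧ L (j k) ω = false} →
      cPr p {ω | T k ω = a}
          {ω | X ω = x ∧ (∀ i, i < k → T i ω = t i) ∧ L (j k) ω = false} =
        cPr p {ω | T k ω = a}
          {ω | (∀ i, i < k → T i ω = t i) ∧ L (j k) ω = false})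
    (hpos : ∀ (i : Fin n) (x : S) (t : Fin m → M),
      0 < Pr p {ω | X ω = x ∧ ∀ k, T k ω = t k} →
      0 < cPr p {ω | L i ω = false} {ω | X ω = x ∧ ∀ k, T k ω = t k}) :
    mutInfo p X (fun ω k => T k ω) ≤
      ∑ i : Fin n,
        (susp p (L i) (fun ω => (X ω, fun k => T k ω)) - susp p (L i) X) := by

  classical
  have hL1 : mutInfo p X (fun ω k => T k ω) = ∑ k : Fin m,
      ((∑ ω, p ω * (Aux.sS p X L T (j k) ((k : ℕ) + 1) ω -
          Aux.sS p X L T (j k) (k : ℕ) ω)) +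
       (∑ ω, p ω *
         (Real.logb 2 (Aux.DLL p L T (j k) ((k : ℕ) + 1) ω / Aux.DD p T ((k : ℕ) + 1) ω) -
          Real.logb 2 (Aux.DLL p L T (j k) (k : ℕ) ω / Aux.DD p T (k : ℕ) ω)))) := by
    rw [Aux.conv_mutInfo p X T]
    calc ∑ ω, p ω * Real.logb 2 (Aux.NN p X T m ω / (Aux.NN p X T 0 ω * Aux.DD p T m ω))
        = ∑ ω, p ω * (∑ k : Fin m,
            ((Aux.sS p X L T (j k) ((k : ℕ) + 1) ω - Aux.sS p X L T (j k) (k : ℕ) ω) +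
             (Real.logb 2 (Aux.DLL p L T (j k) ((k : ℕ) + 1) ω / Aux.DD p T ((k : ℕ) + 1) ω) -
              Real.logb 2 (Aux.DLL p L T (j k) (k : ℕ) ω / Aux.DD p T (k : ℕ) ω)))) := by
          refine Finset.sum_congr rfl fun ω _ => ?_
          rcases (hp ω).eq_or_lt with h | h
          · rw [← h, zero_mul, zero_mul]
          · rw [Aux.PIlemma hp X L T hp1 j hindep hpos h]
      _ = ∑ ω, ∑ k : Fin m, p ω *
            ((Aux.sS p X L T (j k) ((k : ℕ) + 1) ω - Aux.sS p X L T (j k) (k : ℕ) ω) +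
             (Real.logb 2 (Aux.DLL p L T (j k) ((k : ℕ) + 1) ω / Aux.DD p T ((k : ℕ) + 1) ω) -
              Real.logb 2 (Aux.DLL p L T (j k) (k : ℕ) ω / Aux.DD p T (k : ℕ) ω))) := by
          exact Finset.sum_congr rfl fun ω _ => Finset.mul_sum _ _ _
      _ = ∑ k : Fin m, ∑ ω, p ω *
            ((Aux.sS p X L T (j k) ((k : ℕ) + 1) ω - Aux.sS p X L T (j k) (k : ℕ) ω) +
             (Real.logb 2 (Aux.DLL p L T (j k) ((k : ℕ) + 1) ω / Aux.DD p T ((k : ℕ) + 1) ω) -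
              Real.logb 2 (Aux.DLL p L T (j k) (k : ℕ) ω / Aux.DD p T (k : ℕ) ω))) :=
          Finset.sum_comm
      _ = _ := by
          refine Finset.sum_congr rfl fun k _ => ?_
          rw [← Finset.sum_add_distrib]
          exact Finset.sum_congr rfl fun ω _ => mul_add _ _ _
  have hR : ∀ i : Fin n,
      susp p (L i) (fun ω => (X ω, fun k => T k ω)) - susp p (L i) X =
      ∑ k : Fin m, ∑ ω, p ω *
        (Aux.sS p X L T i ((k : ℕ) + 1) ω - Aux.sS p X L T i (k : ℕ) ω) := by
    intro i
    rw [Aux.conv_susp_pair p X L T i, Aux.conv_susp_X p X L T i,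
      ← Aux.telescope (m := m) (fun k => ∑ ω, p ω * Aux.sS p X L T i k ω)]
    refine Finset.sum_congr rfl fun k _ => ?_
    rw [← Finset.sum_sub_distrib]
    exact Finset.sum_congr rfl fun ω _ => (mul_sub _ _ _).symm
  rw [hL1]
  calc ∑ k : Fin m,
      ((∑ ω, p ω * (Aux.sS p X L T (j k) ((k : ℕ) + 1) ω -
          Aux.sS p X L T (j k) (k : ℕ) ω)) +
       (∑ ω, p ω *
         (Real.logb 2 (Aux.DLL p L T (j k) ((k : ℕ) + 1) ω / Aux.DD p T ((k : ℕ) + 1) ω) -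
          Real.logb 2 (Aux.DLL p L T (j k) (k : ℕ) ω / Aux.DD p T (k : ℕ) ω))))
      ≤ ∑ k : Fin m, ∑ ω, p ω * (Aux.sS p X L T (j k) ((k : ℕ) + 1) ω -
          Aux.sS p X L T (j k) (k : ℕ) ω) :=
        Finset.sum_le_sum fun k _ =>
          add_le_of_nonpos_right (Aux.conv_B hp X L T hpos (j k) k)
    _ ≤ ∑ k : Fin m, ∑ i : Fin n, ∑ ω, p ω *
          (Aux.sS p X L T i ((k : ℕ) + 1) ω - Aux.sS p X L T i (k : ℕ) ω) :=
        Finset.sum_le_sum fun k _ =>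
          Finset.single_le_sum
            (f := fun i => ∑ ω, p ω *
              (Aux.sS p X L T i ((k : ℕ) + 1) ω - Aux.sS p X L T i (k : ℕ) ω))
            (fun i _ => Aux.conv_A hp X L T hpos i k) (Finset.mem_univ (j k))
    _ = ∑ i : Fin n, ∑ k : Fin m, ∑ ω, p ω *
          (Aux.sS p X L T i ((k : ℕ) + 1) ω - Aux.sS p X L T i (k : ℕ) ω) :=
        Finset.sum_comm
    _ = ∑ i : Fin n,
        (susp p (L i) (fun ω => (X ω, fun k => T k ω)) - susp p (L i) X) :=
        Finset.sum_congr rfl fun i _ => (hR i).symm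
end
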